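/- For each positive integer n, the polynomial h₂(x) = (1/(2ni))[(x₁+ix₂)ⁿ − (x₁−ix₂)ⁿ] is a real-valued homogeneous harmonic polynomial of degree n on R³ satisfying ∇h₂(1,0,0) = (0,1,0) and |h₂(x)| ≤ 1/n for all x with |x| = 1. -/

import Mathlib

/-- The Laplacian of a function on `ℝ³` (Euclidean space), as the sum of second partial
derivatives along the standard basis directions. -/
noncomputable def lap (f : EuclideanSpace ℝ (Fin 3) → ℝ) (x : EuclideanSpace ℝ (Fin 3)) : ℝ :=
  ∑ i : Fin 3,
    fderiv ℝ (fun y => fderiv ℝ f y (EuclideanSpace.single i 1)) x (EuclideanSpace.single i 1)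


noncomputable def LL : EuclideanSpace ℝ (Fin 3) →L[ℝ] ℂ :=
  Complex.ofRealCLM.comp (EuclideanSpace.proj 0) +
    Complex.I • Complex.ofRealCLM.comp (EuclideanSpace.proj 1)

lemma LL_apply (x : EuclideanSpace ℝ (Fin 3)) : LL x = (x 0 : ℂ) + (x 1 : ℝ) * Complex.I := by
  simp [LL]; ring

lemma key (n : ℕ) (hn : 1 ≤ n) (a b : ℝ) :
    (((a : ℂ) + b * Complex.I) ^ n - ((a : ℂ) - b * Complex.I) ^ n) / (2 * n * Complex.I)
      = ((((a : ℂ) + b * Complex.I) ^ n).im / n : ℝ) := by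
  have hc : ((a : ℂ) - b * Complex.I) = starRingEnd ℂ ((a : ℂ) + b * Complex.I) := by
    simp [Complex.ext_iff]
  rw [hc, ← map_pow]
  set z := ((a : ℂ) + b * Complex.I) ^ n
  have hsub : z - starRingEnd ℂ z = (2 * z.im : ℝ) * Complex.I := Complex.sub_conj z
  have hn0 : (n : ℂ) ≠ 0 := Nat.cast_ne_zero.2 (by omega)
  rw [hsub]
  push_cast
  field_simp [Complex.I_ne_zero]

lemma hasF (m : ℕ) (c : ℂ) (x : EuclideanSpace ℝ (Fin 3)) :
    HasFDerivAt (fun y => ((LL y) ^ m * c).im)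
      (Complex.imCLM.comp (((m : ℂ) * (LL x) ^ (m - 1) * c) • LL)) x := by
  have h1 : HasDerivAt (fun z : ℂ => z ^ m * c) ((m : ℂ) * (LL x) ^ (m - 1) * c) (LL x) :=
    (hasDerivAt_pow m (LL x)).mul_const c
  have h2 := (h1.hasFDerivAt.restrictScalars ℝ).comp x (LL.hasFDerivAt)
  have h3 := Complex.imCLM.hasFDerivAt.comp x h2
  refine h3.congr_fderiv ?_
  ext v
  simp [ContinuousLinearMap.smulRight_apply, ContinuousLinearMap.toSpanSingleton_apply, mul_comm]

lemma LL_single0 : LL (EuclideanSpace.single (0 : Fin 3) (1:ℝ)) = 1 := by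
  simp [LL_apply, EuclideanSpace.single_apply]
lemma LL_single1 : LL (EuclideanSpace.single (1 : Fin 3) (1:ℝ)) = Complex.I := by
  simp [LL_apply, EuclideanSpace.single_apply]
lemma LL_single2 : LL (EuclideanSpace.single (2 : Fin 3) (1:ℝ)) = 0 := by
  simp [LL_apply, EuclideanSpace.single_apply]

/-- `h₂(x) = (1/(2ni))[(x₁+ix₂)ⁿ − (x₁−ix₂)ⁿ]` is a real-valued homogeneous harmonic
polynomial of degree `n` with `∇h₂(1,0,0) = (0,1,0)` and `|h₂| ≤ 1/n` on the unit sphere. -/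
theorem statement2 (n : ℕ) (hn : 1 ≤ n)
    (h₂ : EuclideanSpace ℝ (Fin 3) → ℝ)
    (hdef : ∀ x : EuclideanSpace ℝ (Fin 3),
      h₂ x = (((((x 0 : ℝ) : ℂ) + (x 1 : ℝ) * Complex.I) ^ n
              - (((x 0 : ℝ) : ℂ) - (x 1 : ℝ) * Complex.I) ^ n) / (2 * n * Complex.I)).re) :
    (∀ x : EuclideanSpace ℝ (Fin 3),
      (((((x 0 : ℝ) : ℂ) + (x 1 : ℝ) * Complex.I) ^ n
        - (((x 0 : ℝ) : ℂ) - (x 1 : ℝ) * Complex.I) ^ n) / (2 * n * Complex.I)).im = 0)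
    ∧ (∀ t : ℝ, 0 < t → ∀ x, h₂ (t • x) = t ^ n * h₂ x)
    ∧ (∀ x, lap h₂ x = 0)
    ∧ (∀ j : Fin 3,
        fderiv ℝ h₂ (EuclideanSpace.single 0 1) (EuclideanSpace.single j 1)
          = if j = 1 then 1 else 0)
    ∧ (∀ x : EuclideanSpace ℝ (Fin 3), ‖x‖ = 1 → |h₂ x| ≤ 1 / n) := by
  have hn0 : (n : ℝ) ≠ 0 := Nat.cast_ne_zero.2 (by omega)
  -- h₂ in terms of LL
  have hre : ∀ x, h₂ x = ((LL x) ^ n).im / n := by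
    intro x
    rw [hdef x, key n hn, LL_apply, Complex.ofReal_re]
  -- derivative of h₂
  have hD : ∀ x, HasFDerivAt h₂ (Complex.imCLM.comp (((LL x) ^ (n - 1)) • LL)) x := by
    intro x
    have h1 := (hasF n 1 x).const_smul ((n : ℝ)⁻¹)
    have heq : ((n:ℝ)⁻¹ • fun y => ((LL y) ^ n * 1).im) = h₂ := by
      funext y; rw [hre y]; simp [smul_eq_mul, div_eq_inv_mul]
    rw [heq] at h1
    refine h1.congr_fderiv ?_
    ext v
    simp [smul_eq_mul, Complex.mul_im, Complex.mul_re]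
    field_simp
  have hfd : ∀ x, fderiv ℝ h₂ x = Complex.imCLM.comp (((LL x) ^ (n - 1)) • LL) :=
    fun x => (hD x).fderiv
  refine ⟨?_, ?_, ?_, ?_, ?_⟩
  · intro x
    rw [key n hn]; simp
  · intro t ht x
    have hs : LL (t • x) = (t : ℂ) * LL x := by
      rw [map_smul]; simp [Complex.real_smul]
    rw [hre, hre, hs, mul_pow]
    simp only [Complex.mul_im, ← Complex.ofReal_pow, Complex.ofReal_re, Complex.ofReal_im,
      zero_mul, add_zero]
    ring
  · intro x
    have hterm : ∀ i : Fin 3,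
        fderiv ℝ (fun y => fderiv ℝ h₂ y (EuclideanSpace.single i 1)) x
            (EuclideanSpace.single i 1)
          = (((n - 1 : ℕ) : ℂ) * (LL x) ^ (n - 1 - 1) * LL (EuclideanSpace.single i 1)
              * LL (EuclideanSpace.single i 1)).im := by
      intro i
      have heq : (fun y => fderiv ℝ h₂ y (EuclideanSpace.single i 1))
          = (fun y => ((LL y) ^ (n-1) * LL (EuclideanSpace.single i 1)).im) := by
        funext y; rw [hfd y]; simp [mul_comm]
      rw [heq, (hasF (n-1) (LL (EuclideanSpace.single i 1)) x).fderiv]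
      simp [mul_comm, mul_assoc, mul_left_comm]
    rw [lap, Fin.sum_univ_three, hterm 0, hterm 1, hterm 2,
      LL_single0, LL_single1, LL_single2]
    simp [Complex.mul_im]
  · intro j
    rw [hfd]
    have : LL (EuclideanSpace.single (0:Fin 3) (1:ℝ)) ^ (n-1) = 1 := by
      rw [LL_single0, one_pow]
    simp only [ContinuousLinearMap.coe_comp', Function.comp_apply,
      ContinuousLinearMap.smul_apply, this, one_smul]
    fin_cases j
    · simp [LL_single0]
    · simp [LL_single1]
    · simp [LL_single2]
  · intro x hx
    rw [hre]
    have habs : ‖LL x‖ ≤ 1 := by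
      have h2 : ‖LL x‖ ^ 2 = (x 0)^2 + (x 1)^2 := by
        rw [LL_apply, Complex.sq_norm, Complex.normSq_apply]
        simp
        ring
      have hsum : (x 0)^2 + (x 1)^2 + (x 2)^2 = 1 := by
        have := EuclideanSpace.norm_eq x
        rw [hx] at this
        have h1 : Real.sqrt (∑ i, ‖x i‖^2) = 1 := this.symm
        have h2' : (∑ i, ‖x i‖^2) = 1 := by
          have hnn : (0:ℝ) ≤ ∑ i, ‖x i‖^2 := Finset.sum_nonneg fun i _ => sq_nonneg _
          nlinarith [Real.sq_sqrt hnn]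
        rw [Fin.sum_univ_three] at h2'
        simpa [sq_abs] using h2'
      nlinarith [norm_nonneg (LL x), sq_nonneg (x 2)]
    have him : |((LL x) ^ n).im| ≤ 1 := by
      calc |((LL x) ^ n).im| ≤ ‖(LL x) ^ n‖ := Complex.abs_im_le_norm _
        _ = ‖LL x‖ ^ n := by rw [norm_pow]
        _ ≤ 1 := pow_le_one₀ (norm_nonneg _) habs
    rw [abs_div, abs_of_nonneg (by positivity : (0:ℝ) ≤ (n:ℝ))]
    gcongr
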